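/- Let q be a prime power, F a finite field with q² elements, and δ a generator of F^×. Define R : ZMod (q²-1) × ZMod (q²-1) → ZMod (q²-1) × ZMod (q²-1) by R(i,j) = (k(i,j), l(i,j)) if i ≢ j (mod q-1), and R(i,j) = (i,j) otherwise. Then R ∘ R is the identity map; in particular R is a bijection. -/

import Mathlib

/-- The canonical reduction ring homomorphism `ZMod (q²-1) → ZMod (q-1)`,
which exists since `(q-1) ∣ (q²-1)`. -/
def red (q : ℕ) : ZMod (q ^ 2 - 1) →+* ZMod (q - 1) :=
  ZMod.castHom (by simpa using Nat.sub_dvd_pow_sub_pow q 1 2) (ZMod (q - 1))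

/-- `xij q δ i j` is the element `x_{i,j}`, i.e. the unique `x ∈ ZMod (q²-1)` with
`δ^x = 1 + δ^{j-i}` in `F` (chosen by choice; when `δ` is a generator and
`i ≢ j (mod q-1)`, such an `x` exists and is unique). -/
noncomputable def xij (q : ℕ) {F : Type*} [Field F] (δ : Fˣ) (i j : ZMod (q ^ 2 - 1)) :
    ZMod (q ^ 2 - 1) :=
  @Classical.epsilon _ ⟨0⟩ fun x : ZMod (q ^ 2 - 1) =>
    ((δ ^ x.val : Fˣ) : F) = 1 + ((δ ^ (j - i).val : Fˣ) : F)

/-- `y_{i,j} = x_{i,j} + i - j`. -/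
noncomputable def yij (q : ℕ) {F : Type*} [Field F] (δ : Fˣ) (i j : ZMod (q ^ 2 - 1)) :
    ZMod (q ^ 2 - 1) :=
  xij q δ i j + i - j

/-- `k(i,j) = j - y_{i,j}·(q-1)`. -/
noncomputable def kij (q : ℕ) {F : Type*} [Field F] (δ : Fˣ) (i j : ZMod (q ^ 2 - 1)) :
    ZMod (q ^ 2 - 1) :=
  j - yij q δ i j * ((q - 1 : ℕ) : ZMod (q ^ 2 - 1))

/-- `l(i,j) = i - x_{i,j}·(q-1)`. -/
noncomputable def lij (q : ℕ) {F : Type*} [Field F] (δ : Fˣ) (i j : ZMod (q ^ 2 - 1)) :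
    ZMod (q ^ 2 - 1) :=
  i - xij q δ i j * ((q - 1 : ℕ) : ZMod (q ^ 2 - 1))

/-- The map `R(i,j) = (k(i,j), l(i,j))` if `i ≢ j (mod q-1)`, and `R(i,j) = (i,j)`
otherwise. -/
noncomputable def Rmap (q : ℕ) {F : Type*} [Field F] (δ : Fˣ)
    (p : ZMod (q ^ 2 - 1) × ZMod (q ^ 2 - 1)) : ZMod (q ^ 2 - 1) × ZMod (q ^ 2 - 1) :=
  if red q p.1 ≠ red q p.2 then (kij q δ p.1 p.2, lij q δ p.1 p.2) else p



section Aux8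

variable {q : ℕ} {F : Type*} [Field F] (δ : Fˣ)

private lemma pow_val_natCast8 [NeZero (q ^ 2 - 1)] (ho : orderOf δ = q ^ 2 - 1) (m : ℕ) :
    δ ^ ((m : ZMod (q ^ 2 - 1)).val) = δ ^ m := by
  conv_rhs => rw [← pow_mod_orderOf]
  rw [ho, ZMod.val_natCast]

private lemma pow_val_add8 [NeZero (q ^ 2 - 1)] (ho : orderOf δ = q ^ 2 - 1)
    (a b : ZMod (q ^ 2 - 1)) : δ ^ (a + b).val = δ ^ a.val * δ ^ b.val := by
  have h : ((a.val + b.val : ℕ) : ZMod (q ^ 2 - 1)) = a + b := by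
    push_cast
    rw [ZMod.natCast_val, ZMod.natCast_val, ZMod.cast_id, ZMod.cast_id]
  rw [← h, pow_val_natCast8 δ ho, pow_add]

private lemma pow_val_inj8 [NeZero (q ^ 2 - 1)] (ho : orderOf δ = q ^ 2 - 1)
    {a b : ZMod (q ^ 2 - 1)} (h : δ ^ a.val = δ ^ b.val) : a = b := by
  rw [pow_eq_pow_iff_modEq, ho] at h
  have h2 : a.val = b.val := by
    rwa [Nat.ModEq, Nat.mod_eq_of_lt (ZMod.val_lt a), Nat.mod_eq_of_lt (ZMod.val_lt b)] at h
  exact ZMod.val_injective _ h2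

private lemma exists_pow8 [NeZero (q ^ 2 - 1)] (ho : orderOf δ = q ^ 2 - 1)
    (hδ : Subgroup.zpowers δ = ⊤) (u : Fˣ) : ∃ a : ZMod (q ^ 2 - 1), δ ^ a.val = u := by
  have hu : u ∈ Subgroup.zpowers δ := hδ.symm ▸ Subgroup.mem_top u
  obtain ⟨m, hm⟩ := Subgroup.mem_zpowers_iff.mp hu
  refine ⟨(m : ZMod (q ^ 2 - 1)), ?_⟩
  have hcast : ((((m : ZMod (q ^ 2 - 1)).val : ℤ)) : ZMod (q ^ 2 - 1)) = (m : ZMod (q ^ 2 - 1)) := by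
    push_cast [ZMod.natCast_val, ZMod.cast_id]
    rfl
  have hmod := (ZMod.intCast_eq_intCast_iff ((m : ZMod (q ^ 2 - 1)).val : ℤ) m (q ^ 2 - 1)).mp hcast
  calc δ ^ ((m : ZMod (q ^ 2 - 1)).val)
      = δ ^ (((m : ZMod (q ^ 2 - 1)).val : ℤ)) := (zpow_natCast _ _).symm
    _ = δ ^ m := by rw [zpow_eq_zpow_iff_modEq, ho]; exact hmod
    _ = u := hm

private lemma pow_val_mulq8 [NeZero (q ^ 2 - 1)] (ho : orderOf δ = q ^ 2 - 1)
    (a : ZMod (q ^ 2 - 1)) :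
    δ ^ (a * ((q : ℕ) : ZMod (q ^ 2 - 1))).val = (δ ^ a.val) ^ q := by
  have h : a * ((q : ℕ) : ZMod (q ^ 2 - 1)) = ((a.val * q : ℕ) : ZMod (q ^ 2 - 1)) := by
    push_cast [ZMod.natCast_val, ZMod.cast_id]
    rfl
  rw [h, pow_val_natCast8 δ ho, pow_mul]

private lemma char8 [Fintype F] (hq : IsPrimePow q) (hF : Fintype.card F = q ^ 2) :
    ∃ p m, Nat.Prime p ∧ 0 < m ∧ q = p ^ m ∧ CharP F p := by
  obtain ⟨p, m, hp, hm, rfl⟩ := hq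
  have hp' : Nat.Prime p := hp.nat_prime
  obtain ⟨r, hr⟩ := CharP.exists F
  haveI := hr
  have hrp : r.Prime := CharP.char_is_prime F r
  obtain ⟨k, -, hcard⟩ := FiniteField.card F r
  have hpr : p = r := by
    have h1 : p ∣ r ^ (k : ℕ) := by
      rw [← hcard, hF, ← pow_mul]
      exact dvd_pow_self p (Nat.mul_ne_zero hm.ne' two_ne_zero)
    exact (Nat.prime_dvd_prime_iff_eq hp' hrp).mp (hp'.dvd_of_dvd_pow h1)
  exact ⟨p, m, hp', hm, rfl, hpr ▸ hr⟩

private lemma frob8 [Fintype F] (hq : IsPrimePow q) (hF : Fintype.card F = q ^ 2)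
    (a b : F) : (a + b) ^ q = a ^ q + b ^ q := by
  obtain ⟨p, m, hp, hm, rfl, hchar⟩ := char8 hq hF
  haveI := hchar
  haveI : Fact p.Prime := ⟨hp⟩
  exact add_pow_char_pow a b p m

private lemma neg_one_pow8 [Fintype F] (hq : IsPrimePow q) (hF : Fintype.card F = q ^ 2) :
    ((-1 : F)) ^ (q + 1) = 1 := by
  obtain ⟨p, m, hp, hm, rfl, hchar⟩ := char8 hq hF
  rcases hp.eq_two_or_odd' with h2 | hodd
  · subst h2
    haveI := hchar
    rw [CharTwo.neg_eq, one_pow]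
  · exact (Odd.pow hodd).add_one.neg_one_pow

private lemma one_add_ne8 [Fintype F] [NeZero (q ^ 2 - 1)] (hq : IsPrimePow q)
    (hF : Fintype.card F = q ^ 2) (ho : orderOf δ = q ^ 2 - 1)
    {i j : ZMod (q ^ 2 - 1)} (hij : red q i ≠ red q j) :
    (1 : F) + ((δ ^ (j - i).val : Fˣ) : F) ≠ 0 := by
  have hq2 : 2 ≤ q := hq.two_le
  haveI : NeZero (q - 1) := ⟨by omega⟩
  intro h0
  have hneg : ((δ ^ (j - i).val : Fˣ) : F) = -1 := by linear_combination h0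
  have h1 : ((δ ^ ((j - i).val * (q + 1)) : Fˣ) : F) = 1 := by
    rw [pow_mul]
    push_cast [hneg]
    exact neg_one_pow8 hq hF
  have h2 : (δ ^ ((j - i).val * (q + 1)) : Fˣ) = 1 := Units.ext (by simpa using h1)
  have hdvd : (q ^ 2 - 1) ∣ (j - i).val * (q + 1) := by
    have := orderOf_dvd_of_pow_eq_one h2
    rwa [ho] at this
  have hq1 : (q - 1) ∣ (j - i).val := by
    have heq : q ^ 2 - 1 = (q + 1) * (q - 1) := by simpa using Nat.sq_sub_sq q 1
    obtain ⟨t, ht⟩ := hdvd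
    refine ⟨t, Nat.eq_of_mul_eq_mul_right (show 0 < q + 1 by omega) ?_⟩
    rw [ht, heq]
    ring
  apply hij
  have hjv : (((j - i).val : ℕ) : ZMod (q ^ 2 - 1)) = j - i := by
    rw [ZMod.natCast_val, ZMod.cast_id]
  have hz : red q (j - i) = 0 := by
    rw [← hjv, map_natCast]
    exact (ZMod.natCast_eq_zero_iff _ _).mpr hq1
  have hz2 : red q j - red q i = 0 := by rw [← map_sub]; exact hz
  exact (sub_eq_zero.mp hz2).symm

private lemma xij_spec8 [Fintype F] [NeZero (q ^ 2 - 1)] (hq : IsPrimePow q)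
    (hF : Fintype.card F = q ^ 2) (ho : orderOf δ = q ^ 2 - 1)
    (hδ : Subgroup.zpowers δ = ⊤) {i j : ZMod (q ^ 2 - 1)} (hij : red q i ≠ red q j) :
    ((δ ^ (xij q δ i j).val : Fˣ) : F) = 1 + ((δ ^ (j - i).val : Fˣ) : F) := by
  have hne := one_add_ne8 δ hq hF ho hij
  obtain ⟨a, ha⟩ := exists_pow8 δ ho hδ (Units.mk0 _ hne)
  exact Classical.epsilon_spec
    (p := fun x : ZMod (q ^ 2 - 1) => ((δ ^ x.val : Fˣ) : F) = 1 + ((δ ^ (j - i).val : Fˣ) : F))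
    ⟨a, by show ((δ ^ a.val : Fˣ) : F) = _; rw [ha]; rfl⟩

end Aux8

theorem stmt8 (q : ℕ) (hq : IsPrimePow q) (F : Type*) [Field F] [Fintype F]
    (hF : Fintype.card F = q ^ 2) (δ : Fˣ) (hδ : Subgroup.zpowers δ = ⊤) :
    Rmap q δ ∘ Rmap q δ = id ∧ Function.Bijective (Rmap q δ) := by
  classical
  have hq2 : 2 ≤ q := hq.two_le
  have h4 : 4 ≤ q ^ 2 := by
    calc (4 : ℕ) = 2 ^ 2 := rfl
      _ ≤ q ^ 2 := Nat.pow_le_pow_left hq2 2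
  haveI : NeZero (q ^ 2 - 1) := ⟨by omega⟩
  haveI : DecidableEq F := Classical.decEq F
  have ho : orderOf δ = q ^ 2 - 1 := by
    rw [orderOf_eq_card_of_forall_mem_zpowers (fun x => hδ.symm ▸ Subgroup.mem_top x),
      Nat.card_eq_fintype_card, Fintype.card_units, hF]
  have hqc : ((q - 1 : ℕ) : ZMod (q ^ 2 - 1)) = ((q : ℕ) : ZMod (q ^ 2 - 1)) - 1 := by
    have h : q - 1 + 1 = q := by omega
    rw [← h]
    push_cast
    ring
  have hc0 : ((q - 1 : ℕ) : ZMod (q ^ 2 - 1)) * (((q : ℕ) : ZMod (q ^ 2 - 1)) + 1) = 0 := by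
    have h1 : (((q : ℕ) : ZMod (q ^ 2 - 1)) + 1) = ((q + 1 : ℕ) : ZMod (q ^ 2 - 1)) := by
      push_cast; ring
    rw [h1, ← Nat.cast_mul]
    have h2 : (q - 1) * (q + 1) = q ^ 2 - 1 := by
      rw [mul_comm]; simpa using (Nat.sq_sub_sq q 1).symm
    rw [h2, ZMod.natCast_self]
  have hredq : red q (((q : ℕ)) : ZMod (q ^ 2 - 1)) = 1 := by
    rw [map_natCast]
    have h : q = (q - 1) + 1 := by omega
    rw [h]
    push_cast [ZMod.natCast_self]
    ring
  have key : ∀ p : ZMod (q ^ 2 - 1) × ZMod (q ^ 2 - 1), Rmap q δ (Rmap q δ p) = p := by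
    rintro ⟨i, j⟩
    by_cases hij : red q i = red q j
    · simp [Rmap, hij]
    · have hij' : red q i ≠ red q j := hij
      have hkl : kij q δ i j - lij q δ i j = (j - i) * ((q : ℕ) : ZMod (q ^ 2 - 1)) := by
        rw [kij, lij, yij, hqc]; ring
      have hlk : lij q δ i j - kij q δ i j = (i - j) * ((q : ℕ) : ZMod (q ^ 2 - 1)) := by
        rw [kij, lij, yij, hqc]; ring
      have hred2 : red q (kij q δ i j) ≠ red q (lij q δ i j) := by
        intro h
        apply hij'
        have e : red q (kij q δ i j) - red q (lij q δ i j) = (red q j - red q i) * 1 := by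
          rw [← map_sub, hkl, map_mul, hredq, map_sub]
        rw [h, sub_self] at e
        have e2 : red q j = red q i := by
          have e3 := e.symm
          rwa [mul_one, sub_eq_zero] at e3
        exact e2.symm
      have hxspec := xij_spec8 δ hq hF ho hδ hij'
      have hyspec : ((δ ^ (yij q δ i j).val : Fˣ) : F)
          = 1 + ((δ ^ ((i - j) : ZMod (q ^ 2 - 1)).val : Fˣ) : F) := by
        have hy : yij q δ i j = xij q δ i j + (i - j) := by rw [yij]; ring
        have hone : ((δ ^ ((j - i) : ZMod (q ^ 2 - 1)).val : Fˣ) : F)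
            * ((δ ^ ((i - j) : ZMod (q ^ 2 - 1)).val : Fˣ) : F) = 1 := by
          rw [← Units.val_mul, ← pow_val_add8 δ ho]
          norm_num [show (j - i) + (i - j) = (0 : ZMod (q ^ 2 - 1)) from by ring, ZMod.val_zero]
        rw [hy, pow_val_add8 δ ho, Units.val_mul, hxspec]
        linear_combination hone
      have hx' : xij q δ (kij q δ i j) (lij q δ i j)
          = yij q δ i j * ((q : ℕ) : ZMod (q ^ 2 - 1)) := by
        apply pow_val_inj8 δ ho
        apply Units.ext
        rw [xij_spec8 δ hq hF ho hδ hred2, hlk, pow_val_mulq8 δ ho (i - j),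
          pow_val_mulq8 δ ho (yij q δ i j)]
        simp only [Units.val_pow_eq_pow_val] at hyspec ⊢
        rw [hyspec, frob8 hq hF, one_pow]
      have hy' : yij q δ (kij q δ i j) (lij q δ i j)
          = xij q δ i j * ((q : ℕ) : ZMod (q ^ 2 - 1)) := by
        rw [yij, hx', yij]
        linear_combination hkl
      have hk2 : kij q δ (kij q δ i j) (lij q δ i j) = i := by
        rw [kij, hy', lij]
        linear_combination (-(xij q δ i j)) * hc0
      have hl2 : lij q δ (kij q δ i j) (lij q δ i j) = j := by
        rw [lij, hx', kij, yij]
        linear_combination (-(xij q δ i j + i - j)) * hc0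
      have step1 : Rmap q δ (i, j) = (kij q δ i j, lij q δ i j) := by
        simp only [Rmap]
        rw [if_pos hij']
      have step2 : Rmap q δ (kij q δ i j, lij q δ i j) = (i, j) := by
        simp only [Rmap]
        rw [if_pos hred2]
        exact Prod.ext hk2 hl2
      rw [step1, step2]
  exact ⟨funext key, Function.Involutive.bijective key⟩
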